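/- For every integer n ≥ 1, a homogeneous polynomial F ∈ ℂ[λ,μ] of degree 2n+1 is an associator polynomial (i.e. satisfies F(λ,μ) = F(μ,λ) and F(λ,μ) = F(λ,−λ−μ) identically) if and only if there exist complex numbers β̃_0, β̃_1, …, β̃_{⌊(n−1)/3⌋} such that F(λ,μ) = ∑_{k=0}^{⌊(n−1)/3⌋} β̃_k · λ^{2k+1} μ^{2k+1} (λ+μ)^{2k+1} (λ² + λμ + μ²)^{n−3k−1}. -/
import Mathlib


open MvPolynomial

noncomputable section AssocAux

namespace AssocAux

abbrev R2 := MvPolynomial (Fin 2) ℂ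

def pp : R2 := X 0 ^ 2 + X 0 * X 1 + X 1 ^ 2
def qq : R2 := X 0 * X 1 * (X 0 + X 1)
def pt (u v : ℂ) : Fin 2 → ℂ := fun i => if i = 0 then u else v
def smap : Fin 2 → R2 := fun i => if i = 0 then X 1 else X 0
def tmap : Fin 2 → R2 := fun i => if i = 0 then X 0 else - X 0 - X 1

lemma pp_homog : pp.IsHomogeneous 2 := by
  have := (((isHomogeneous_X ℂ (0:Fin 2)).pow 2).add
    ((isHomogeneous_X ℂ (0:Fin 2)).mul (isHomogeneous_X ℂ 1))).add
    ((isHomogeneous_X ℂ (1:Fin 2)).pow 2)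
  simpa [pp] using this

lemma qq_homog : qq.IsHomogeneous 3 := by
  have := ((isHomogeneous_X ℂ (0:Fin 2)).mul (isHomogeneous_X ℂ 1)).mul
    ((isHomogeneous_X ℂ (0:Fin 2)).add (isHomogeneous_X ℂ 1))
  simpa [qq] using this

lemma qq_ne : qq ≠ 0 := by
  intro h
  have := congrArg (aeval (pt 1 1)) h
  simp [qq, pt] at this

lemma spp : aeval smap pp = pp := by simp [smap, pp, map_add, map_mul]; ring
lemma sqq : aeval smap qq = qq := by simp [smap, qq, map_add, map_mul]; ring
lemma tpp : aeval tmap pp = pp := by simp [tmap, pp, map_add, map_mul]; ring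
lemma tqq : aeval tmap qq = qq := by simp [tmap, qq, map_add, map_mul]; ring

lemma deg2 (m : Fin 2 →₀ ℕ) : m.degree = m 0 + m 1 := by
  rw [Finsupp.degree, ← Fin.sum_univ_two (f := fun i => m i)]
  exact Finset.sum_subset (Finset.subset_univ _) (by
    intro x _ hx; simpa using Finsupp.notMem_support_iff.mp hx)

lemma homog_supp {F : R2} {d : ℕ} (hF : F.IsHomogeneous d)
    {m : Fin 2 →₀ ℕ} (hm : coeff m F ≠ 0) : m 0 + m 1 = d := by
  rw [← deg2, Finsupp.degree_eq_weight_one]; exact hF hm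

lemma aeval_0v {F : R2} {d : ℕ} (hF : F.IsHomogeneous d) (v : ℂ) :
    aeval (pt 0 v) F = coeff (Finsupp.single 1 d) F * v ^ d := by
  conv_lhs => rw [F.as_sum]
  rw [map_sum, Finset.sum_eq_single (Finsupp.single 1 d)]
  · rw [aeval_monomial, Finsupp.prod_fintype _ _ (fun i => pow_zero _), Fin.prod_univ_two]
    simp [pt]
  · intro m hm hne
    have h1 := homog_supp hF (mem_support_iff.mp hm)
    have h0 : m 0 ≠ 0 := by
      intro h0
      apply hne
      ext i; fin_cases i <;> simp [h0] <;> omega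
    rw [aeval_monomial, Finsupp.prod_fintype _ _ (fun i => pow_zero _), Fin.prod_univ_two]
    simp [pt, zero_pow h0]
  · intro h
    rw [notMem_support_iff.mp h]; simp

lemma aeval_u0 {F : R2} {d : ℕ} (hF : F.IsHomogeneous d) :
    aeval (pt 1 0) F = coeff (Finsupp.single 0 d) F := by
  conv_lhs => rw [F.as_sum]
  rw [map_sum, Finset.sum_eq_single (Finsupp.single 0 d)]
  · rw [aeval_monomial, Finsupp.prod_fintype _ _ (fun i => pow_zero _), Fin.prod_univ_two]
    simp [pt]
  · intro m hm hne
    have h1 := homog_supp hF (mem_support_iff.mp hm)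
    have h0 : m 1 ≠ 0 := by
      intro h0
      apply hne
      ext i; fin_cases i <;> simp [h0] <;> omega
    rw [aeval_monomial, Finsupp.prod_fintype _ _ (fun i => pow_zero _), Fin.prod_univ_two]
    simp [pt, zero_pow h0]
  · intro h
    rw [notMem_support_iff.mp h]; simp

lemma dvd_X0 {F : R2} {d : ℕ} (hF : F.IsHomogeneous d)
    (h : coeff (Finsupp.single 1 d) F = 0) :
    ∃ G : R2, G.IsHomogeneous (d - 1) ∧ F = X 0 * G := by
  have key : ∀ m ∈ F.support, m 0 ≠ 0 := by
    intro m hm h0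
    have h1 := homog_supp hF (mem_support_iff.mp hm)
    apply mem_support_iff.mp hm
    have : m = Finsupp.single 1 d := by
      ext i; fin_cases i <;> simp [h0] <;> omega
    rw [this]; exact h
  refine ⟨∑ m ∈ F.support, monomial (m - Finsupp.single 0 1) (coeff m F), ?_, ?_⟩
  · apply MvPolynomial.IsHomogeneous.sum
    intro m hm
    apply isHomogeneous_monomial
    rw [deg2]
    have h1 := homog_supp hF (mem_support_iff.mp hm)
    have h0 := key m hm
    simp [Finsupp.tsub_apply]
    omega
  · conv_lhs => rw [F.as_sum]
    rw [Finset.mul_sum]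
    apply Finset.sum_congr rfl
    intro m hm
    rw [X, monomial_mul, ← add_tsub_cancel_of_le
      (Finsupp.single_le_iff.mpr (Nat.one_le_iff_ne_zero.mpr (key m hm))), one_mul]
    simp

lemma dvd_X1 {F : R2} {d : ℕ} (hF : F.IsHomogeneous d)
    (h : coeff (Finsupp.single 0 d) F = 0) :
    ∃ G : R2, G.IsHomogeneous (d - 1) ∧ F = X 1 * G := by
  have key : ∀ m ∈ F.support, m 1 ≠ 0 := by
    intro m hm h0
    have h1 := homog_supp hF (mem_support_iff.mp hm)
    apply mem_support_iff.mp hm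
    have : m = Finsupp.single 0 d := by
      ext i; fin_cases i <;> simp [h0] <;> omega
    rw [this]; exact h
  refine ⟨∑ m ∈ F.support, monomial (m - Finsupp.single 1 1) (coeff m F), ?_, ?_⟩
  · apply MvPolynomial.IsHomogeneous.sum
    intro m hm
    apply isHomogeneous_monomial
    rw [deg2]
    have h1 := homog_supp hF (mem_support_iff.mp hm)
    have h0 := key m hm
    simp [Finsupp.tsub_apply]
    omega
  · conv_lhs => rw [F.as_sum]
    rw [Finset.mul_sum]
    apply Finset.sum_congr rfl
    intro m hm
    rw [X, monomial_mul, ← add_tsub_cancel_of_le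
      (Finsupp.single_le_iff.mpr (Nat.one_le_iff_ne_zero.mpr (key m hm))), one_mul]
    simp

lemma dvd_add01 {F : R2} {d : ℕ} (hF : F.IsHomogeneous d)
    (h : aeval (pt 1 (-1)) F = 0) :
    ∃ G : R2, G.IsHomogeneous (d - 1) ∧ F = (X 0 + X 1) * G := by
  set cinv : Fin 2 → R2 := fun i => if i = 0 then X 0 else X 1 - X 0 with hcinv
  set cmap : Fin 2 → R2 := fun i => if i = 0 then X 0 else X 0 + X 1 with hcmap
  have hB : (aeval cinv F).IsHomogeneous d := by
    have := hF.aeval cinv (n := 1) (fun i => by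
      fin_cases i
      · simpa [hcinv] using isHomogeneous_X ℂ (0 : Fin 2)
      · simpa [hcinv] using (isHomogeneous_X ℂ (1 : Fin 2)).sub (isHomogeneous_X ℂ 0))
    simpa using this
  have hval : aeval (pt 1 0) (aeval cinv F) = 0 := by
    rw [comp_aeval_apply]
    have : (fun i => aeval (pt 1 0) (cinv i)) = pt 1 (-1) := by
      funext i; fin_cases i <;> simp [hcinv, pt]
    rw [this, h]
  obtain ⟨W, hW, hBW⟩ := dvd_X1 hB (by rw [← aeval_u0 hB, hval])
  have hid : (fun i => aeval cmap (cinv i)) = (X : Fin 2 → R2) := by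
    funext i; fin_cases i <;> simp [hcinv, hcmap]
  refine ⟨aeval cmap W, ?_, ?_⟩
  · have := hW.aeval cmap (n := 1) (fun i => by
      fin_cases i
      · simpa [hcmap] using isHomogeneous_X ℂ (0 : Fin 2)
      · simpa [hcmap] using (isHomogeneous_X ℂ (0 : Fin 2)).add (isHomogeneous_X ℂ 1))
    simpa using this
  · calc F = aeval cmap (aeval cinv F) := by rw [comp_aeval_apply, hid, aeval_X_left_apply]
    _ = aeval cmap (X 1 * W) := by rw [hBW]
    _ = (X 0 + X 1) * aeval cmap W := by rw [map_mul, aeval_X]; simp [hcmap]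

lemma qq_dvd {F : R2} {d : ℕ} (hF : F.IsHomogeneous d)
    (h01 : aeval (pt 0 1) F = 0) (h10 : aeval (pt 1 0) F = 0)
    (h1m1 : aeval (pt 1 (-1)) F = 0) :
    ∃ G : R2, G.IsHomogeneous (d - 3) ∧ F = qq * G := by
  obtain ⟨A, hA, hFA⟩ := dvd_X0 hF (by
    have := aeval_0v hF 1
    rw [h01] at this
    simpa using this.symm)
  have h10A : aeval (pt 1 0) A = 0 := by
    have := h10
    rw [hFA, map_mul, aeval_X] at this
    simpa [pt] using this
  obtain ⟨B, hB, hAB⟩ := dvd_X1 hA (by rw [← aeval_u0 hA, h10A])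
  have h1m1B : aeval (pt 1 (-1)) B = 0 := by
    have := h1m1
    rw [hFA, hAB, map_mul, map_mul, aeval_X, aeval_X] at this
    simp [pt] at this
    exact this
  obtain ⟨G, hG, hBG⟩ := dvd_add01 hB h1m1B
  refine ⟨G, by simpa [show d - 1 - 1 - 1 = d - 3 by omega] using hG, ?_⟩
  rw [hFA, hAB, hBG, qq]; ring

lemma point_of_sigma {F : R2} (hσ : aeval smap F = F) (u v : ℂ) :
    aeval (pt u v) F = aeval (pt v u) F := by
  conv_lhs => rw [← hσ]
  rw [comp_aeval_apply,
    show (fun i => aeval (pt u v) (smap i)) = pt v u from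
      funext fun i => by fin_cases i <;> simp [smap, pt]]

lemma point_of_tau {F : R2} (hτ : aeval tmap F = F) (u v : ℂ) :
    aeval (pt u v) F = aeval (pt u (-u - v)) F := by
  conv_rhs => rw [← hτ]
  rw [comp_aeval_apply,
    show (fun i => aeval (pt u (-u - v)) (tmap i)) = pt u v from
      funext fun i => by fin_cases i <;> (simp [tmap, pt]; try ring)]

def SS (d : ℕ) : Finset ℕ := (Finset.range (d/3+1)).filter (fun b => b % 2 = d % 2)

lemma shift (d : ℕ) (hd : 3 ≤ d) (c : ℕ → ℂ) :
    qq * ∑ b ∈ SS (d-3), C (c b) * qq ^ b * pp ^ (((d-3) - 3*b)/2)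
    = ∑ b ∈ SS d, C (if b = 0 then 0 else c (b-1)) * qq ^ b * pp ^ ((d - 3*b)/2) := by
  rw [Finset.mul_sum]
  have hfil : (∑ b ∈ (SS d).filter (fun b => b ≠ 0),
          C (if b = 0 then (0:ℂ) else c (b-1)) * qq ^ b * pp ^ ((d - 3*b)/2))
      = ∑ b ∈ SS d, C (if b = 0 then (0:ℂ) else c (b-1)) * qq ^ b * pp ^ ((d - 3*b)/2) := by
    apply Finset.sum_filter_of_ne
    intro b _ hb hb0
    rw [hb0] at hb
    simp at hb
  rw [← hfil]
  apply Finset.sum_nbij' (i := fun b => b + 1) (j := fun b => b - 1)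
  · intro b hb
    simp only [SS, Finset.mem_filter, Finset.mem_range] at hb ⊢
    omega
  · intro b hb
    simp only [SS, Finset.mem_filter, Finset.mem_range] at hb ⊢
    omega
  · intro b _
    omega
  · intro b hb
    simp only [SS, Finset.mem_filter, Finset.mem_range] at hb
    omega
  · intro b hb
    have he : d - 3 * (b + 1) = (d - 3) - 3 * b := by omega
    simp only [Nat.add_sub_cancel, if_neg (by omega : ¬(b + 1 = 0)), he]
    ring

lemma main : ∀ d : ℕ, ∀ F : R2, F.IsHomogeneous d →
    aeval smap F = F → aeval tmap F = F →
    ∃ c : ℕ → ℂ, F = ∑ b ∈ SS d, C (c b) * qq ^ b * pp ^ ((d - 3*b)/2) := by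
  intro d
  induction d using Nat.strong_induction_on with
  | _ d IH =>
  intro F hF hσ hτ
  rcases Nat.even_or_odd d with he | ho
  · -- even case
    obtain ⟨r, hr⟩ := he
    set γ := coeff (Finsupp.single 1 d) F with hγ
    have hv01 : aeval (pt 0 1) F = γ := by simpa using aeval_0v hF 1
    have hv10 : aeval (pt 1 0) F = γ := by rw [point_of_sigma hσ 1 0, hv01]
    have hv1m1 : aeval (pt 1 (-1)) F = γ := by
      have := point_of_tau hτ 1 0
      rw [show (-1 - 0 : ℂ) = -1 by ring] at this
      rw [← this, hv10]
    have hpm : (pp ^ (d/2)).IsHomogeneous d := by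
      have := pp_homog.pow (d/2)
      rwa [show 2 * (d/2) = d by omega] at this
    set H := F - C γ * pp ^ (d/2) with hH
    have hHhom : H.IsHomogeneous d := hF.sub (hpm.C_mul γ)
    have hppv : ∀ u v : ℂ, aeval (pt u v) pp = u^2 + u*v + v^2 := by
      intro u v; simp [pp, pt]
    have hH01 : aeval (pt 0 1) H = 0 := by
      simp [hH, map_sub, map_mul, map_pow, hv01, hppv]
    have hH10 : aeval (pt 1 0) H = 0 := by
      simp [hH, map_sub, map_mul, map_pow, hv10, hppv]
    have hH1m1 : aeval (pt 1 (-1)) H = 0 := by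
      simp [hH, map_sub, map_mul, map_pow, hv1m1, hppv]
    have hHσ : aeval smap H = H := by
      rw [hH, map_sub, map_mul, map_pow, hσ, spp, aeval_C]; rfl
    have hHτ : aeval tmap H = H := by
      rw [hH, map_sub, map_mul, map_pow, hτ, tpp, aeval_C]; rfl
    obtain ⟨K, hK, hHK⟩ := qq_dvd hHhom hH01 hH10 hH1m1
    have hmem0 : 0 ∈ SS d := by
      simp only [SS, Finset.mem_filter, Finset.mem_range]
      omega
    by_cases hH0 : H = 0
    · refine ⟨fun b => if b = 0 then γ else 0, ?_⟩
      have hFe : F = C γ * pp ^ (d/2) := by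
        have := sub_eq_zero.mp hH0
        exact this
      rw [Finset.sum_eq_single_of_mem 0 hmem0 (fun b _ hb => by simp [hb])]
      simpa using hFe
    · have hKσ : aeval smap K = K := by
        apply mul_left_cancel₀ qq_ne
        have : aeval smap (qq * K) = qq * K := by rw [← hHK, hHσ]
        rwa [map_mul, sqq] at this
      have hKτ : aeval tmap K = K := by
        apply mul_left_cancel₀ qq_ne
        have : aeval tmap (qq * K) = qq * K := by rw [← hHK, hHτ]
        rwa [map_mul, tqq] at this
      have hK0 : K ≠ 0 := fun h => hH0 (by rw [hHK, h, mul_zero])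
      have hd3 : 3 ≤ d := by
        have hHH : H.IsHomogeneous (3 + (d - 3)) := by rw [hHK]; exact qq_homog.mul hK
        have := hHhom.inj_right hHH hH0
        omega
      obtain ⟨c, hc⟩ := IH (d-3) (by omega) K hK hKσ hKτ
      refine ⟨fun b => if b = 0 then γ else c (b-1), ?_⟩
      have hsum : ∑ b ∈ SS d, C (if b = 0 then γ else c (b-1)) * qq ^ b * pp ^ ((d - 3*b)/2)
          = C γ * pp ^ (d/2) +
            ∑ b ∈ SS d, C (if b = 0 then (0:ℂ) else c (b-1)) * qq ^ b * pp ^ ((d - 3*b)/2) := by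
        have h1 : ∀ b ∈ (SS d).erase 0,
            C (if b = 0 then γ else c (b-1)) * qq ^ b * pp ^ ((d - 3*b)/2)
            = C (if b = 0 then (0:ℂ) else c (b-1)) * qq ^ b * pp ^ ((d - 3*b)/2) :=
          fun b hb => by
            rw [if_neg (Finset.ne_of_mem_erase hb), if_neg (Finset.ne_of_mem_erase hb)]
        rw [← Finset.add_sum_erase _ _ hmem0, ← Finset.add_sum_erase _
          (fun b => C (if b = 0 then (0:ℂ) else c (b-1)) * qq ^ b * pp ^ ((d - 3*b)/2)) hmem0,
          Finset.sum_congr rfl h1]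
        simp
      rw [hsum, ← shift d hd3 c, ← hc, ← hHK, hH]
      ring
  · -- odd case
    have hc1 : coeff (Finsupp.single 1 d) F = 0 := by
      have h1 := point_of_tau hτ 0 1
      rw [show (-0 - 1 : ℂ) = -1 by ring] at h1
      rw [aeval_0v hF 1, aeval_0v hF (-1), ho.neg_one_pow] at h1
      simp only [one_pow, mul_one, mul_neg_one] at h1
      have := add_self_eq_zero.mp (by linear_combination h1)
      exact this
    have hv01 : aeval (pt 0 1) F = 0 := by rw [aeval_0v hF 1, hc1, zero_mul]
    have hv10 : aeval (pt 1 0) F = 0 := by rw [point_of_sigma hσ 1 0, hv01]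
    have hv1m1 : aeval (pt 1 (-1)) F = 0 := by
      have := point_of_tau hτ 1 0
      rw [show (-1 - 0 : ℂ) = -1 by ring] at this
      rw [← this, hv10]
    obtain ⟨G, hG, hFG⟩ := qq_dvd hF hv01 hv10 hv1m1
    by_cases hG0 : G = 0
    · refine ⟨0, ?_⟩
      rw [hFG, hG0, mul_zero]
      symm
      apply Finset.sum_eq_zero
      intro b _; simp
    · have hGσ : aeval smap G = G := by
        apply mul_left_cancel₀ qq_ne
        have : aeval smap (qq * G) = qq * G := by rw [← hFG, hσ]
        rwa [map_mul, sqq] at this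
      have hGτ : aeval tmap G = G := by
        apply mul_left_cancel₀ qq_ne
        have : aeval tmap (qq * G) = qq * G := by rw [← hFG, hτ]
        rwa [map_mul, tqq] at this
      have hF0 : F ≠ 0 := by rw [hFG]; exact mul_ne_zero qq_ne hG0
      have hd3 : 3 ≤ d := by
        have hFH : F.IsHomogeneous (3 + (d - 3)) := by rw [hFG]; exact qq_homog.mul hG
        have := hF.inj_right hFH hF0
        omega
      obtain ⟨c, hc⟩ := IH (d-3) (by omega) G hG hGσ hGτ
      refine ⟨fun b => if b = 0 then 0 else c (b-1), ?_⟩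
      rw [hFG, hc, shift d hd3 c]

end AssocAux
end AssocAux

/-- Proposition 4.10b: for `n ≥ 1`, a homogeneous polynomial `F ∈ ℂ[λ,μ]` of
degree `2n+1` satisfies `F(λ,μ) = F(μ,λ)` and `F(λ,μ) = F(λ,−λ−μ)` if and only if
`F = ∑_{k=0}^{⌊(n−1)/3⌋} β̃ₖ · λ^{2k+1} μ^{2k+1} (λ+μ)^{2k+1} (λ² + λμ + μ²)^{n−3k−1}`. -/
theorem associator_polynomial_odd (n : ℕ) (hn : 1 ≤ n) (F : MvPolynomial (Fin 2) ℂ)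
    (hF : F.IsHomogeneous (2 * n + 1)) :
    (aeval (fun i : Fin 2 => if i = 0 then (X 1 : MvPolynomial (Fin 2) ℂ) else X 0) F = F ∧
     aeval (fun i : Fin 2 => if i = 0 then (X 0 : MvPolynomial (Fin 2) ℂ) else - X 0 - X 1) F
       = F)
    ↔ ∃ β : ℕ → ℂ,
        F = ∑ k ∈ Finset.range ((n - 1) / 3 + 1),
          C (β k) * X 0 ^ (2 * k + 1) * X 1 ^ (2 * k + 1) * (X 0 + X 1) ^ (2 * k + 1) *
            (X 0 ^ 2 + X 0 * X 1 + X 1 ^ 2) ^ (n - 3 * k - 1) := by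
  have tform : ∀ (γ : ℂ) (a e : ℕ),
      C γ * X 0 ^ a * X 1 ^ a * (X 0 + X 1) ^ a *
        (X 0 ^ 2 + X 0 * X 1 + X 1 ^ 2 : MvPolynomial (Fin 2) ℂ) ^ e
      = C γ * AssocAux.qq ^ a * AssocAux.pp ^ e := by
    intro γ a e
    rw [AssocAux.qq, AssocAux.pp, mul_pow, mul_pow]
    ring
  constructor
  · rintro ⟨h1, h2⟩
    have hσ : aeval AssocAux.smap F = F := h1
    have hτ : aeval AssocAux.tmap F = F := h2
    obtain ⟨c, hc⟩ := AssocAux.main (2*n+1) F hF hσ hτ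
    refine ⟨fun k => c (2*k+1), ?_⟩
    rw [hc]
    apply Finset.sum_nbij' (i := fun b => (b-1)/2) (j := fun k => 2*k+1)
    · intro b hb
      simp only [AssocAux.SS, Finset.mem_filter, Finset.mem_range] at hb ⊢
      omega
    · intro k hk
      simp only [AssocAux.SS, Finset.mem_filter, Finset.mem_range] at hk ⊢
      omega
    · intro b hb
      simp only [AssocAux.SS, Finset.mem_filter, Finset.mem_range] at hb
      omega
    · intro k _
      omega
    · intro b hb
      simp only [AssocAux.SS, Finset.mem_filter, Finset.mem_range] at hb
      have hb1 : 2 * ((b - 1) / 2) + 1 = b := by omega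
      have he : n - 3 * ((b - 1) / 2) - 1 = (2 * n + 1 - 3 * b) / 2 := by omega
      simp only [tform, hb1, he]
  · rintro ⟨β, hc⟩
    subst hc
    constructor
    · show aeval AssocAux.smap _ = _
      rw [map_sum]
      refine Finset.sum_congr rfl fun k _ => ?_
      rw [tform]
      simp only [map_mul, map_pow, AssocAux.sqq, AssocAux.spp, aeval_C,
        MvPolynomial.algebraMap_eq]
    · show aeval AssocAux.tmap _ = _
      rw [map_sum]
      refine Finset.sum_congr rfl fun k _ => ?_
      rw [tform]
      simp only [map_mul, map_pow, AssocAux.tqq, AssocAux.tpp, aeval_C,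
        MvPolynomial.algebraMap_eq]
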